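/- In the q-shuffle algebra V, for all n ≥ 1: Σ_{k=0}^{n} q^{2k−n} G_k ⋆ G_{n−k} = Σ_{k=0}^{n} q^{n−2k} G_k ⋆ G_{n−k} = [2]_q^n y (xy+yx)^{n−1} x, where the right-hand side is computed in the free (concatenation) algebra. -/

import Mathlib

noncomputable section

/-- Words in the letters `x` (= `false`) and `y` (= `true`). -/
abbrev Wd := List Bool

/-- The underlying vector space of the free algebra `F⟨x,y⟩`,
with the words as a basis. -/
abbrev V (F : Type*) [Field F] := Wd →₀ F

/-- The pairing `⟨u,v⟩` on letters: `2` if equal, `-2` if distinct. -/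
def pr (a b : Bool) : ℤ := if a = b then 2 else -2

/-- `⟨u₁,b⟩ + ⟨u₂,b⟩ + ⋯ + ⟨u_r,b⟩` for a word `u` and a letter `b`. -/
def wsum (u : Wd) (b : Bool) : ℤ := (u.map fun a => pr a b).sum

variable {F : Type*} [Field F]

/-- Left multiplication by a letter, in the free (concatenation) algebra. -/
def lmul (a : Bool) (f : V F) : V F := Finsupp.mapDomain (fun w => a :: w) f

/-- The `q`-shuffle product of two words (as an element of `V F`), defined by
Rosso's recursion
`u ⋆ v = u₁((u₂⋯u_r) ⋆ v) + q^{⟨u₁,v₁⟩+⋯+⟨u_r,v₁⟩} v₁(u ⋆ (v₂⋯v_s))`. -/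
def sh (q : F) : Wd → Wd → V F
  | [], v => Finsupp.single v 1
  | u@(_ :: _), [] => Finsupp.single u 1
  | a :: u', b :: v' =>
      lmul a (sh q u' (b :: v')) +
        q ^ wsum (a :: u') b • lmul b (sh q (a :: u') v')
  termination_by u v => u.length + v.length
  decreasing_by all_goals (simp only [List.length_cons]; omega)

/-- The `q`-shuffle product on `V F`, extended bilinearly from words. -/
def st (q : F) (f g : V F) : V F :=
  f.sum fun u cu => g.sum fun v cv => (cu * cv) • sh q u v

/-- The concatenation (free-algebra) product on `V F`. -/
def cm (f g : V F) : V F :=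
  f.sum fun u cu => g.sum fun v cv => Finsupp.single (u ++ v) (cu * cv)

/-- Powers with respect to the concatenation product. -/
def cpow (f : V F) : ℕ → V F
  | 0 => Finsupp.single [] 1
  | n + 1 => cm f (cpow f n)

/-- The alternating word `W_{-k} = xyx⋯x` of length `2k+1`. -/
def altX : ℕ → Wd
  | 0 => [false]
  | k + 1 => false :: true :: altX k

/-- The alternating word `W_{k+1} = yxy⋯y` of length `2k+1`. -/
def altY : ℕ → Wd
  | 0 => [true]
  | k + 1 => true :: false :: altY k

/-- The alternating word `G_k = (yx)^k`. -/
def gw : ℕ → Wd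
  | 0 => []
  | k + 1 => true :: false :: gw k

/-- The alternating word `G̃_k = (xy)^k`. -/
def gtw : ℕ → Wd
  | 0 => []
  | k + 1 => false :: true :: gtw k

/-- `W_{-k}` as an element of `V F`. -/
def Wm (F : Type*) [Field F] (k : ℕ) : V F := Finsupp.single (altX k) 1

/-- `W_{k+1}` as an element of `V F`. -/
def Wp (F : Type*) [Field F] (k : ℕ) : V F := Finsupp.single (altY k) 1

/-- `G_k` as an element of `V F`. -/
def Gn (F : Type*) [Field F] (k : ℕ) : V F := Finsupp.single (gw k) 1

/-- `G̃_k` as an element of `V F`. -/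
def Gt (F : Type*) [Field F] (k : ℕ) : V F := Finsupp.single (gtw k) 1

-- === auxiliary development ===
section Aux
variable {F : Type*} [Field F]

lemma wsum_cons (a : Bool) (u : Wd) (b : Bool) : wsum (a :: u) b = pr a b + wsum u b := by
  simp [wsum]

lemma wsum_gw (k : ℕ) (b : Bool) : wsum (gw k) b = 0 := by
  induction k with
  | zero => simp [gw, wsum]
  | succ k ih => rw [gw, wsum_cons, wsum_cons, ih]; cases b <;> simp [pr]

lemma wsum_fgw (k : ℕ) (b : Bool) : wsum (false :: gw k) b = pr false b := by
  rw [wsum_cons, wsum_gw, add_zero]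

lemma gw_succ (k : ℕ) : gw (k + 1) = true :: false :: gw k := rfl

/-- concatenation with a fixed word on the left -/
def cl (u : Wd) (f : V F) : V F := Finsupp.mapDomain (u ++ ·) f

lemma lmul_eq_cl (a : Bool) (f : V F) : lmul a f = cl [a] f := rfl

lemma cl_cl (u v : Wd) (f : V F) : cl u (cl v f) = cl (u ++ v) f := by
  rw [cl, cl, cl, ← Finsupp.mapDomain_comp]
  congr 1; funext w; simp [Function.comp, List.append_assoc]

lemma cl_nil (f : V F) : cl [] f = f := by
  rw [cl]; convert Finsupp.mapDomain_id; rfl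

lemma cl_add (u : Wd) (f g : V F) : cl u (f + g) = cl u f + cl u g :=
  Finsupp.mapDomain_add

lemma cl_smul (u : Wd) (c : F) (f : V F) : cl u (c • f) = c • cl u f :=
  Finsupp.mapDomain_smul _ _

lemma cl_sum {α : Type*} (u : Wd) (s : Finset α) (g : α → V F) :
    cl u (∑ k ∈ s, g k) = ∑ k ∈ s, cl u (g k) :=
  map_sum (Finsupp.mapDomain.addMonoidHom (u ++ ·)) _ _

lemma cl_single (u w : Wd) (c : F) : cl u (Finsupp.single w c) = Finsupp.single (u ++ w) c :=
  Finsupp.mapDomain_single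

lemma lmul_add (a : Bool) (f g : V F) : lmul a (f + g) = lmul a f + lmul a g :=
  Finsupp.mapDomain_add

lemma lmul_smul (a : Bool) (c : F) (f : V F) : lmul a (c • f) = c • lmul a f :=
  Finsupp.mapDomain_smul _ _

lemma lmul_sum {α : Type*} (a : Bool) (s : Finset α) (g : α → V F) :
    lmul a (∑ k ∈ s, g k) = ∑ k ∈ s, lmul a (g k) :=
  map_sum (Finsupp.mapDomain.addMonoidHom (a :: ·)) _ _

lemma lmul_single (a : Bool) (w : Wd) (c : F) :
    lmul a (Finsupp.single w c) = Finsupp.single (a :: w) c :=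
  Finsupp.mapDomain_single

lemma cm_single_one_left (u : Wd) (f : V F) : cm (Finsupp.single u (1:F)) f = cl u f := by
  rw [cm, Finsupp.sum_single_index]
  · simp only [one_mul]; rfl
  · simp [Finsupp.sum, Finset.sum_const_zero]

lemma cm_add_left (f g h : V F) : cm (f + g) h = cm f h + cm g h := by
  rw [cm, cm, cm]
  apply Finsupp.sum_add_index' <;> intros <;>
    simp [add_mul, Finsupp.single_add, Finsupp.sum_add]

lemma cm_cl_left (u : Wd) (f g : V F) : cm (cl u f) g = cl u (cm f g) := by
  rw [cm, cl, Finsupp.sum_mapDomain_index]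
  · rw [cm, cl, Finsupp.mapDomain_sum]
    apply Finsupp.sum_congr
    intro w _
    rw [Finsupp.mapDomain_sum]
    apply Finsupp.sum_congr
    intro v _
    rw [Finsupp.mapDomain_single, List.append_assoc]
  · intro b; simp [Finsupp.sum, Finset.sum_const_zero]
  · intro b m₁ m₂; simp [add_mul, Finsupp.single_add, Finsupp.sum_add]

lemma st_Gn (q : F) (k l : ℕ) : st q (Gn F k) (Gn F l) = sh q (gw k) (gw l) := by
  rw [st, Gn, Gn, Finsupp.sum_single_index, Finsupp.sum_single_index]
  · simp
  · simp
  · simp [Finsupp.sum, Finset.sum_const_zero]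

-- the four shuffle recursions on alternating words
lemma shA (q : F) (k l : ℕ) : sh q (gw (k+1)) (gw (l+1)) =
    lmul true (sh q (false :: gw k) (gw (l+1))) +
      lmul true (sh q (gw (k+1)) (false :: gw l)) := by
  rw [gw_succ, gw_succ l, sh]
  rw [show wsum (true :: false :: gw k) true = wsum (gw (k+1)) true from rfl, wsum_gw]
  norm_num

lemma shA0 (q : F) (k : ℕ) : sh q (gw (k+1)) (gw 0) =
    lmul true (sh q (false :: gw k) (gw 0)) := by
  rw [show gw 0 = [] from rfl, gw_succ, sh, sh, lmul, Finsupp.mapDomain_single]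

lemma shB (q : F) (k l : ℕ) : sh q (false :: gw k) (gw (l+1)) =
    lmul false (sh q (gw k) (gw (l+1))) +
      q ^ (-2 : ℤ) • lmul true (sh q (false :: gw k) (false :: gw l)) := by
  rw [gw_succ, sh, wsum_fgw]
  rfl

lemma shB0 (q : F) (k : ℕ) : sh q (false :: gw k) (gw 0) =
    lmul false (sh q (gw k) (gw 0)) := by
  cases k with
  | zero => rw [show gw 0 = [] from rfl, sh, sh, lmul, Finsupp.mapDomain_single]
  | succ k =>
      rw [show gw 0 = [] from rfl, gw_succ, sh, sh, lmul, Finsupp.mapDomain_single]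

lemma shC (q : F) (k l : ℕ) : sh q (gw (k+1)) (false :: gw l) =
    lmul true (sh q (false :: gw k) (false :: gw l)) +
      lmul false (sh q (gw (k+1)) (gw l)) := by
  rw [gw_succ, sh, show wsum (true :: false :: gw k) false = wsum (gw (k+1)) false from rfl,
    wsum_gw]
  norm_num

lemma shC0 (q : F) (l : ℕ) : sh q (gw 0) (false :: gw l) =
    lmul false (sh q (gw 0) (gw l)) := by
  rw [show gw 0 = [] from rfl, sh, sh, lmul, Finsupp.mapDomain_single]

lemma shD (q : F) (k l : ℕ) : sh q (false :: gw k) (false :: gw l) =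
    lmul false (sh q (gw k) (false :: gw l)) +
      q ^ (2 : ℤ) • lmul false (sh q (false :: gw k) (gw l)) := by
  rw [sh, wsum_fgw]
  rfl

end Aux
section Sums
variable {F : Type*} [Field F]

/-- exponent weight -/
def wt (e : ℤ) (n k : ℕ) : ℤ := e * (2 * (k : ℤ) - (n : ℤ))

def Ts (q : F) (e : ℤ) (n : ℕ) : V F :=
  ∑ k ∈ Finset.range (n + 1), q ^ wt e n k • sh q (gw k) (gw (n - k))

def Qs (q : F) (e : ℤ) (n : ℕ) : V F :=
  ∑ k ∈ Finset.range (n + 1), q ^ wt e n k • sh q (false :: gw k) (gw (n - k))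

def Rs (q : F) (e : ℤ) (n : ℕ) : V F :=
  ∑ k ∈ Finset.range (n + 1), q ^ wt e n k • sh q (gw k) (false :: gw (n - k))

def Ss (q : F) (e : ℤ) (n : ℕ) : V F :=
  ∑ k ∈ Finset.range (n + 1), q ^ wt e n k • sh q (false :: gw k) (false :: gw (n - k))

lemma L4 (q : F) (e : ℤ) (n : ℕ) :
    Ss q e n = lmul false (Rs q e n) + q ^ (2 : ℤ) • lmul false (Qs q e n) := by
  rw [Ss, Rs, Qs, lmul_sum, lmul_sum, Finset.smul_sum, ← Finset.sum_add_distrib]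
  refine Finset.sum_congr rfl fun k _ => ?_
  simp only [shD, smul_add, lmul_smul, smul_smul]
  rw [mul_comm]

lemma L2 (q : F) (hq : q ≠ 0) (e : ℤ) (n : ℕ) :
    Qs q e (n+1) = lmul false (Ts q e (n+1)) + q ^ (-2-e) • lmul true (Ss q e n) := by
  rw [Qs, Ts, Ss, Finset.sum_range_succ]
  conv_rhs => rw [Finset.sum_range_succ]
  rw [lmul_add, lmul_sum, lmul_sum, Finset.smul_sum]
  have hbdry : q ^ wt e (n+1) (n+1) • sh q (false :: gw (n+1)) (gw (n+1-(n+1))) =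
      lmul false (q ^ wt e (n+1) (n+1) • sh q (gw (n+1)) (gw (n+1-(n+1)))) := by
    rw [Nat.sub_self, shB0, lmul_smul]
  have hmain : ∀ k ∈ Finset.range (n+1),
      q ^ wt e (n+1) k • sh q (false :: gw k) (gw (n+1-k)) =
        lmul false (q ^ wt e (n+1) k • sh q (gw k) (gw (n+1-k))) +
          q ^ (-2-e) • lmul true (q ^ wt e n k • sh q (false :: gw k) (false :: gw (n-k))) := by
    intro k hk
    have hk' : k ≤ n := Nat.lt_succ_iff.mp (Finset.mem_range.mp hk)
    rw [show n + 1 - k = (n - k) + 1 by omega, shB, smul_add]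
    congr 1
    · rw [lmul_smul]
    · simp only [lmul_smul, smul_smul, ← zpow_add₀ hq]
      congr 2
      simp only [wt]; push_cast; ring
  rw [Finset.sum_congr rfl hmain, Finset.sum_add_distrib, hbdry]
  abel

lemma L3 (q : F) (hq : q ≠ 0) (e : ℤ) (n : ℕ) :
    Rs q e (n+1) = lmul false (Ts q e (n+1)) + q ^ e • lmul true (Ss q e n) := by
  rw [Rs, Ts, Ss, Finset.sum_range_succ']
  conv_rhs => rw [Finset.sum_range_succ']
  rw [lmul_add, lmul_sum, lmul_sum, Finset.smul_sum]
  simp only [Nat.add_sub_add_right, Nat.sub_zero]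
  have hbdry : q ^ wt e (n+1) 0 • sh q (gw 0) (false :: gw (n+1)) =
      lmul false (q ^ wt e (n+1) 0 • sh q (gw 0) (gw (n+1))) := by
    rw [shC0, lmul_smul]
  have hmain : ∀ i ∈ Finset.range (n+1),
      q ^ wt e (n+1) (i+1) • sh q (gw (i+1)) (false :: gw (n-i)) =
        lmul false (q ^ wt e (n+1) (i+1) • sh q (gw (i+1)) (gw (n-i))) +
          q ^ e • lmul true (q ^ wt e n i • sh q (false :: gw i) (false :: gw (n-i))) := by
    intro i _
    rw [shC, smul_add, add_comm]
    congr 1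
    · rw [lmul_smul]
    · simp only [lmul_smul, smul_smul, ← zpow_add₀ hq]
      congr 2
      simp only [wt]; push_cast; ring
  rw [Finset.sum_congr rfl hmain, Finset.sum_add_distrib, hbdry]
  abel

lemma L1 (q : F) (hq : q ≠ 0) (e : ℤ) (n : ℕ) :
    Ts q e (n+1) = q ^ e • lmul true (Qs q e n) + q ^ (-e) • lmul true (Rs q e n) := by
  rw [Ts, Qs, Rs, Finset.sum_range_succ']
  simp only [Nat.add_sub_add_right, Nat.sub_zero]
  rw [Finset.sum_range_succ]
  rw [lmul_sum, lmul_sum, Finset.smul_sum, Finset.smul_sum]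
  conv_rhs => rw [Finset.sum_range_succ, Finset.sum_range_succ']
  have hmain : ∀ i ∈ Finset.range n,
      q ^ wt e (n+1) (i+1) • sh q (gw (i+1)) (gw (n-i)) =
        q ^ e • lmul true (q ^ wt e n i • sh q (false :: gw i) (gw (n-i))) +
          q ^ (-e) • lmul true (q ^ wt e n (i+1) • sh q (gw (i+1)) (false :: gw (n-(i+1)))) := by
    intro i hi
    have hi' : i < n := Finset.mem_range.mp hi
    rw [show n - i = (n - (i+1)) + 1 by omega, shA, smul_add]
    congr 1
    · simp only [lmul_smul, smul_smul, ← zpow_add₀ hq]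
      congr 2
      simp only [wt]; push_cast; ring
    · simp only [lmul_smul, smul_smul, ← zpow_add₀ hq]
      congr 2
      simp only [wt]; push_cast; ring
  have hlast : q ^ wt e (n+1) (n+1) • sh q (gw (n+1)) (gw (n-n)) =
      q ^ e • lmul true (q ^ wt e n n • sh q (false :: gw n) (gw (n-n))) := by
    rw [Nat.sub_self, shA0]
    simp only [lmul_smul, smul_smul, ← zpow_add₀ hq]
    congr 2
    simp only [wt]; push_cast; ring
  have hfirst : q ^ wt e (n+1) 0 • sh q (gw 0) (gw (n+1)) =
      q ^ (-e) • lmul true (q ^ wt e n 0 • sh q (gw 0) (false :: gw (n-0))) := by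
    rw [Nat.sub_zero, show gw 0 = ([] : Wd) from rfl, sh, sh]
    simp only [lmul_smul, lmul_single, smul_smul, ← zpow_add₀ hq]
    rw [show (true :: false :: gw n : Wd) = gw (n+1) from rfl]
    congr 2
    simp only [wt]; push_cast; ring
  rw [Finset.sum_congr rfl hmain, Finset.sum_add_distrib, hlast, hfirst]
  abel

end Sums
section Main
variable {F : Type*} [Field F]

lemma Qs0 (q : F) (e : ℤ) : Qs q e 0 = Finsupp.single [false] 1 := by
  rw [Qs, Finset.sum_range_one, show gw 0 = ([] : Wd) from rfl, sh,
    show wt e 0 0 = 0 by simp [wt], zpow_zero, one_smul]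

lemma Rs0 (q : F) (e : ℤ) : Rs q e 0 = Finsupp.single [false] 1 := by
  rw [Rs, Finset.sum_range_one, show gw 0 = ([] : Wd) from rfl, sh,
    show wt e 0 0 = 0 by simp [wt], zpow_zero, one_smul]

lemma cm3 (u : Wd) (P g : V F) :
    cm (Finsupp.single u (1:F)) (cm (cm (Gt F 1 + Gn F 1) P) g) =
      cl (u ++ [false, true]) (cm P g) + cl (u ++ [true, false]) (cm P g) := by
  rw [show Gt F 1 = Finsupp.single [false, true] (1:F) from rfl,
      show Gn F 1 = Finsupp.single [true, false] (1:F) from rfl]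
  simp only [cm_add_left, cm_single_one_left, cm_cl_left, cl_add, cl_cl]

lemma main (q : F) (hq : q ≠ 0) (e : ℤ) (he : q ^ e + q ^ (-e) = q + q⁻¹) (n : ℕ) :
    Ts q e (n+1) = ((q + q⁻¹) ^ (n+1)) •
        cm (Wp F 0) (cm (cpow (Gt F 1 + Gn F 1) n) (Wm F 0)) ∧
      Ss q e n = (q * (q + q⁻¹) ^ (n+1)) •
        cm (Wm F 0) (cm (cpow (Gt F 1 + Gn F 1) n) (Wm F 0)) := by
  have hone : q ^ (-e) * q ^ e = 1 := by
    rw [← zpow_add₀ hq]; simp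
  have hm2 : q ^ e * q ^ (-2 - e) = q ^ (-2 : ℤ) := by
    rw [← zpow_add₀ hq]; congr 1; ring
  have hm2' : q ^ (2:ℤ) * q ^ (-2 - e) = q ^ (-e) := by
    rw [← zpow_add₀ hq]; congr 1; ring
  have hqinv : q ^ (-2 : ℤ) = q⁻¹ * q⁻¹ := by
    rw [show (-2 : ℤ) = (-1) + (-1) by ring, zpow_add₀ hq, zpow_neg_one]
  have hq2 : q ^ (2 : ℤ) = q * q := by
    rw [show (2 : ℤ) = 1 + 1 by ring, zpow_add₀ hq, zpow_one]
  induction n with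
  | zero =>
      constructor
      · rw [L1 q hq e 0, Qs0 q e, Rs0 q e, cpow]
        simp only [show Wp F 0 = Finsupp.single [true] (1:F) from rfl,
          show Wm F 0 = Finsupp.single [false] (1:F) from rfl, cm_single_one_left, cl_nil,
          cl_single, lmul_single, List.cons_append, List.nil_append, zero_add, pow_one]
        rw [← add_smul, he]
      · rw [L4 q e 0, Qs0 q e, Rs0 q e, cpow]
        simp only [show Wm F 0 = Finsupp.single [false] (1:F) from rfl, cm_single_one_left,
          cl_nil, cl_single, lmul_single, List.cons_append, List.nil_append, zero_add, pow_one]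
        rw [show (q * (q + q⁻¹) : F) = 1 + q ^ (2:ℤ) by rw [hq2]; field_simp; ring,
          add_smul, one_smul]
  | succ n ih =>
      obtain ⟨ihT, ihS⟩ := ih
      have hW : cm (Wp F 0) (cm (cpow (Gt F 1 + Gn F 1) n) (Wm F 0)) =
          cl [true] (cm (cpow (Gt F 1 + Gn F 1) n) (Wm F 0)) := by
        rw [show Wp F 0 = Finsupp.single [true] (1:F) from rfl, cm_single_one_left]
      have hX : cm (Wm F 0) (cm (cpow (Gt F 1 + Gn F 1) n) (Wm F 0)) =
          cl [false] (cm (cpow (Gt F 1 + Gn F 1) n) (Wm F 0)) := by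
        rw [show Wm F 0 = Finsupp.single [false] (1:F) from rfl, cm_single_one_left]
      have e1 : Ts q e (n+1+1) = (q + q⁻¹) • lmul true (lmul false (Ts q e (n+1))) +
          (q ^ (-2:ℤ) + 1) • lmul true (lmul true (Ss q e n)) := by
        rw [L1 q hq e (n+1), L2 q hq e n, L3 q hq e n, lmul_add, lmul_add, lmul_smul,
          lmul_smul, smul_add, smul_add, smul_smul, smul_smul, hm2, hone, ← he,
          add_smul, add_smul]
        simp only [one_smul]
        abel
      have e1S : Ss q e (n+1) = (1 + q ^ (2:ℤ)) • lmul false (lmul false (Ts q e (n+1))) +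
          (q + q⁻¹) • lmul false (lmul true (Ss q e n)) := by
        rw [L4 q e (n+1), L2 q hq e n, L3 q hq e n, lmul_add, lmul_add, lmul_smul,
          lmul_smul, smul_add, smul_smul, hm2', ← he, add_smul, add_smul]
        simp only [one_smul]
        abel
      constructor
      · rw [e1, ihT, ihS, hW, hX]
        conv_rhs => rw [cpow, show Wp F 0 = Finsupp.single [true] (1:F) from rfl,
          cm3 [true] (cpow (Gt F 1 + Gn F 1) n) (Wm F 0)]
        simp only [lmul_eq_cl, cl_smul, cl_cl, smul_smul, smul_add, List.cons_append,
          List.nil_append]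
        congr 1
        · congr 1
          ring
        · congr 1
          have h2q : (q ^ (-2:ℤ) + 1) * q = q + q⁻¹ := by
            rw [hqinv]; field_simp; ring
          linear_combination ((q + q⁻¹) ^ (n+1)) * h2q
      · rw [e1S, ihT, ihS, hW, hX]
        conv_rhs => rw [cpow, show Wm F 0 = Finsupp.single [false] (1:F) from rfl,
          cm3 [false] (cpow (Gt F 1 + Gn F 1) n) (Finsupp.single [false] 1)]
        simp only [lmul_eq_cl, cl_smul, cl_cl, smul_smul, smul_add, List.cons_append,
          List.nil_append]
        congr 1
        · congr 1
          have h2q : (1 + q ^ (2:ℤ)) = q * (q + q⁻¹) := by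
            rw [hq2]; field_simp; ring
          linear_combination ((q + q⁻¹) ^ (n+1)) * h2q
        · congr 1
          ring

end Main

/-- For `n ≥ 1`: `Σ_{k=0}^n q^{2k−n} G_k ⋆ G_{n−k} = Σ_{k=0}^n q^{n−2k} G_k ⋆ G_{n−k}
= [2]_q^n y(xy+yx)^{n−1}x`. -/
theorem stmt_12 {F : Type*} [Field F] (q : F) (hq : q ≠ 0)
    (hq' : ∀ n : ℕ, 0 < n → q ^ n ≠ 1) (n : ℕ) (hn : 1 ≤ n) :
    (∑ k ∈ Finset.range (n + 1),
        q ^ (2 * (k : ℤ) - (n : ℤ)) • st q (Gn F k) (Gn F (n - k)))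
      = (∑ k ∈ Finset.range (n + 1),
          q ^ ((n : ℤ) - 2 * (k : ℤ)) • st q (Gn F k) (Gn F (n - k))) ∧
    (∑ k ∈ Finset.range (n + 1),
        q ^ (2 * (k : ℤ) - (n : ℤ)) • st q (Gn F k) (Gn F (n - k)))
      = ((q + q⁻¹) ^ n) •
          cm (Wp F 0) (cm (cpow (Gt F 1 + Gn F 1) (n - 1)) (Wm F 0)) := by
  obtain ⟨m, rfl⟩ : ∃ m, n = m + 1 := ⟨n - 1, by omega⟩
  have he1 : q ^ (1:ℤ) + q ^ (-(1:ℤ)) = q + q⁻¹ := by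
    rw [zpow_one, zpow_neg_one]
  have he2 : q ^ (-1:ℤ) + q ^ (-(-1:ℤ)) = q + q⁻¹ := by
    rw [neg_neg, zpow_one, zpow_neg_one, add_comm]
  have h1 := (main q hq 1 he1 m).1
  have h2 := (main q hq (-1) he2 m).1
  have hc1 : (∑ k ∈ Finset.range (m + 1 + 1),
      q ^ (2 * (k : ℤ) - ((m + 1 : ℕ) : ℤ)) • st q (Gn F k) (Gn F (m + 1 - k))) =
      Ts q 1 (m + 1) := by
    rw [Ts]
    refine Finset.sum_congr rfl fun k _ => ?_
    rw [st_Gn, show (2 * (k : ℤ) - ((m + 1 : ℕ) : ℤ)) = wt 1 (m + 1) k by simp [wt]]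
  have hc2 : (∑ k ∈ Finset.range (m + 1 + 1),
      q ^ (((m + 1 : ℕ) : ℤ) - 2 * (k : ℤ)) • st q (Gn F k) (Gn F (m + 1 - k))) =
      Ts q (-1) (m + 1) := by
    rw [Ts]
    refine Finset.sum_congr rfl fun k _ => ?_
    rw [st_Gn, show (((m + 1 : ℕ) : ℤ) - 2 * (k : ℤ)) = wt (-1) (m + 1) k by simp only [wt]; ring]
  constructor
  · rw [hc1, hc2, h1, h2]
  · rw [hc1, h1]
    rfl
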